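/- Let 𝒢 be a temporal graph with n vertices and lifetime T such that each snapshot has at least one edge, let ω ≥ 0, and fix an integer k ≥ 2. Then the non-normalised temporal k-modularity satisfies q̃*_{k,ω}(𝒢) ≥ (1 − 1/k)·q̃*_ω(𝒢) + n·ω·(T−1)/k. -/

import Mathlib

open Finset
open scoped Classical

namespace TemporalModularity

noncomputable section

variable {V : Type*} [Fintype V] {P : Type*}

/-- Twice the number of edges of `G` with both endpoints in `A`
(the sum over ordered pairs of vertices of `A` of the adjacency indicator). -/
def twoE (G : SimpleGraph V) (A : Finset V) : ℝ :=
  ∑ u ∈ A, ∑ v ∈ A, if G.Adj u v then (1 : ℝ) else 0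

/-- The degree of `v` in `G`, as a real number. -/
def deg (G : SimpleGraph V) (v : V) : ℝ :=
  ∑ u : V, if G.Adj v u then (1 : ℝ) else 0

/-- The number of edges of `G` (half the sum of the degrees), as a real number. -/
def numEdges (G : SimpleGraph V) : ℝ := (∑ v : V, deg G v) / 2

/-- The volume of `A` in `G`: the sum of the degrees of the vertices of `A`. -/
def vol (G : SimpleGraph V) (A : Finset V) : ℝ := ∑ v ∈ A, deg G v

/-- The part with label `p` of the vertex partition induced by the labelling `π`. -/
def part (π : V → P) (p : P) : Finset V := univ.filter fun v => π v = p

/-- `Σ_{A ∈ 𝒜} (2 e_G(A) − vol_G(A)² / (2m))`, where `𝒜` is the partition of the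
vertices induced by the labelling `π` (empty parts contribute zero). -/
def snapTerm (G : SimpleGraph V) (π : V → P) : ℝ :=
  ∑ p ∈ univ.image π,
    (twoE G (part π p) - vol G (part π p) ^ 2 / (2 * numEdges G))

/-- The static modularity `q(G,𝒜) = Σ_{A ∈ 𝒜} (e(A)/m − vol(A)²/(4m²))` of the
partition induced by the labelling `π`. -/
def staticQ (G : SimpleGraph V) (π : V → P) : ℝ :=
  ∑ p ∈ univ.image π,
    (twoE G (part π p) / (2 * numEdges G) -
      vol G (part π p) ^ 2 / (4 * numEdges G ^ 2))

/-- The maximum static modularity `q*(G)` over all vertex partitions (every partition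
of `V` is induced by some labelling `V → V`). -/
def staticQStar (G : SimpleGraph V) : ℝ := ⨆ π : V → V, staticQ G π

/-- The loyalty contribution `L(𝒜)` of the temporal partition `π` with lifetime `T`. -/
def loyalty (T : ℕ) (π : V → ℕ → P) : ℝ :=
  ∑ v : V, ∑ t ∈ Icc 1 (T - 1), if π v t = π v (t + 1) then (1 : ℝ) else 0

/-- The per-time loyalty `L(𝒜,t)` of the temporal partition `π`. -/
def loyaltyAt (π : V → ℕ → P) (t : ℕ) : ℝ :=
  ∑ v : V, if π v t = π v (t + 1) then (1 : ℝ) else 0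

/-- The normalisation factor `μ_ω(𝒢) = ω n (T−1)/2 + Σ_t m_t`. -/
def mu (G : ℕ → SimpleGraph V) (T : ℕ) (ω : ℝ) : ℝ :=
  ω * (Fintype.card V) * ((T : ℝ) - 1) / 2 + ∑ t ∈ Icc 1 T, numEdges (G t)

/-- The non-normalised temporal modularity of the restriction of the temporal graph
`G` to the time interval `[a,b]`, for the partition `π`. -/
def qTildeI (G : ℕ → SimpleGraph V) (a b : ℕ) (ω : ℝ) (π : V → ℕ → P) : ℝ :=
  (∑ t ∈ Icc a b, snapTerm (G t) fun v => π v t) +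
    ω * ∑ v : V, ∑ t ∈ Icc a (b - 1), if π v t = π v (t + 1) then (1 : ℝ) else 0

/-- The non-normalised temporal modularity `q̃_ω(𝒢,𝒜)` of the partition `π` of the
temporal graph `G` with lifetime `T`. -/
def qTilde (G : ℕ → SimpleGraph V) (T : ℕ) (ω : ℝ) (π : V → ℕ → P) : ℝ :=
  qTildeI G 1 T ω π

/-- The temporal modularity `q_ω(𝒢,𝒜)` of the partition `π` of the temporal graph `G`
with lifetime `T`. -/
def qTemp (G : ℕ → SimpleGraph V) (T : ℕ) (ω : ℝ) (π : V → ℕ → P) : ℝ :=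
  qTilde G T ω π / (2 * mu G T ω)

/-- The temporal modularity `q*_ω(𝒢)`: the maximum of `q_ω(𝒢,𝒜)` over all partitions
(every partition of `V × [T]` is induced by some labelling into `ℕ`). -/
def qTempStar (G : ℕ → SimpleGraph V) (T : ℕ) (ω : ℝ) : ℝ :=
  ⨆ π : V → ℕ → ℕ, qTemp G T ω π

/-- The temporal `k`-modularity `q*_{k,ω}(𝒢)`: the maximum of `q_ω(𝒢,𝒜)` over all
partitions into at most `k` parts. -/
def qTempStarK (G : ℕ → SimpleGraph V) (T : ℕ) (ω : ℝ) (k : ℕ) : ℝ :=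
  ⨆ π : V → ℕ → Fin k, qTemp G T ω π

/-- The maximum non-normalised temporal modularity of the restriction of `G` to the
time interval `[a,b]`, over all partitions. -/
def qTildeStarI (G : ℕ → SimpleGraph V) (a b : ℕ) (ω : ℝ) : ℝ :=
  ⨆ π : V → ℕ → ℕ, qTildeI G a b ω π

/-- The non-normalised temporal modularity `q̃*_ω(𝒢)` of the temporal graph `G` with
lifetime `T`. -/
def qTildeStar (G : ℕ → SimpleGraph V) (T : ℕ) (ω : ℝ) : ℝ := qTildeStarI G 1 T ω

/-- The maximum non-normalised temporal modularity of the restriction of `G` to `[a,b]`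
over partitions into at most `c` parts. -/
def qTildeStarKI (G : ℕ → SimpleGraph V) (a b : ℕ) (ω : ℝ) (c : ℕ) : ℝ :=
  ⨆ π : V → ℕ → Fin c, qTildeI G a b ω π

/-- The non-normalised temporal `c`-modularity `q̃*_{c,ω}(𝒢)`. -/
def qTildeStarK (G : ℕ → SimpleGraph V) (T : ℕ) (ω : ℝ) (c : ℕ) : ℝ :=
  qTildeStarKI G 1 T ω c

end




section Aux

variable {V : Type*} [Fintype V] {P : Type*}

/-- indicator of a proposition, with a fixed (classical) decidability instance. -/
noncomputable def ind (p : Prop) : ℝ := if p then 1 else 0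

lemma ind_eq (p : Prop) [Decidable p] : ind p = if p then 1 else 0 := by
  by_cases hp : p <;> simp [ind, hp]

lemma ind_pos {p : Prop} (h : p) : ind p = 1 := by simp [ind, h]

lemma ind_neg {p : Prop} (h : ¬ p) : ind p = 0 := by simp [ind, h]

lemma deg_nonneg (G : SimpleGraph V) (v : V) : 0 ≤ deg G v := by
  unfold deg; positivity

lemma sum_deg (G : SimpleGraph V) : ∑ v : V, deg G v = 2 * numEdges G := by
  unfold numEdges; ring

lemma numEdges_pos (G : SimpleGraph V) (h : G.edgeSet.Nonempty) : 0 < numEdges G := by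
  obtain ⟨e, he⟩ := h
  induction e with
  | h u v =>
    have hadj : G.Adj u v := he
    have h1 : (1 : ℝ) ≤ deg G u := by
      unfold deg
      calc (1:ℝ) = if G.Adj u v then (1:ℝ) else 0 := by simp [hadj]
        _ ≤ _ := Finset.single_le_sum (f := fun x => if G.Adj u x then (1:ℝ) else 0)
            (fun x _ => by positivity) (mem_univ v)
    have h2 : (1:ℝ) ≤ ∑ w : V, deg G w :=
      le_trans h1 (Finset.single_le_sum (fun x _ => deg_nonneg G x) (mem_univ u))
    unfold numEdges; linarith

lemma indicator_sum (π : V → P) (u v : V) :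
    ∑ p ∈ univ.image π, ind (π u = p) * ind (π v = p) = ind (π u = π v) := by
  rw [Finset.sum_eq_single (π u)]
  · by_cases h : π u = π v <;> simp [ind, h, eq_comm]
  · intro p _ hp
    simp [ind, Ne.symm hp]
  · intro h
    exact absurd (mem_image_of_mem π (mem_univ u)) h

lemma snapTerm_eq (G : SimpleGraph V) (π : V → P) :
    snapTerm G π = ∑ u : V, ∑ v : V,
      (ind (G.Adj u v) - deg G u * deg G v / (2 * numEdges G)) * ind (π u = π v) := by
  have htwoE : ∀ p, twoE G (part π p) =
      ∑ u : V, ∑ v : V, ind (G.Adj u v) * (ind (π u = p) * ind (π v = p)) := by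
    intro p
    unfold twoE part
    rw [Finset.sum_filter]
    refine Finset.sum_congr rfl fun u _ => ?_
    by_cases hu : π u = p
    · rw [if_pos hu, Finset.sum_filter]
      refine Finset.sum_congr rfl fun v _ => ?_
      by_cases hv : π v = p
      · rw [if_pos hv, ind_pos hu, ind_pos hv, mul_one, mul_one, ind_eq]
      · rw [if_neg hv, ind_neg hv, mul_zero, mul_zero]
    · rw [if_neg hu]
      symm
      refine Finset.sum_eq_zero fun v _ => ?_
      rw [ind_neg hu, zero_mul, mul_zero]
  have hvol : ∀ p, vol G (part π p) ^ 2 / (2 * numEdges G) =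
      ∑ u : V, ∑ v : V, (deg G u * deg G v / (2 * numEdges G)) *
        (ind (π u = p) * ind (π v = p)) := by
    intro p
    have hv : vol G (part π p) = ∑ u : V, deg G u * ind (π u = p) := by
      unfold vol part
      rw [Finset.sum_filter]
      refine Finset.sum_congr rfl fun u _ => ?_
      by_cases hu : π u = p
      · rw [if_pos hu, ind_pos hu, mul_one]
      · rw [if_neg hu, ind_neg hu, mul_zero]
    rw [hv, sq, Finset.sum_mul_sum]
    rw [Finset.sum_div]
    refine Finset.sum_congr rfl fun u _ => ?_
    rw [Finset.sum_div]
    refine Finset.sum_congr rfl fun v _ => ?_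
    ring
  unfold snapTerm
  calc ∑ p ∈ univ.image π, (twoE G (part π p) - vol G (part π p) ^ 2 / (2 * numEdges G))
      = ∑ p ∈ univ.image π, ∑ u : V, ∑ v : V,
          (ind (G.Adj u v) - deg G u * deg G v / (2 * numEdges G)) *
            (ind (π u = p) * ind (π v = p)) := by
        refine Finset.sum_congr rfl fun p _ => ?_
        rw [htwoE p, hvol p, ← Finset.sum_sub_distrib]
        refine Finset.sum_congr rfl fun u _ => ?_
        rw [← Finset.sum_sub_distrib]
        refine Finset.sum_congr rfl fun v _ => ?_
        ring
    _ = ∑ u : V, ∑ v : V,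
          (ind (G.Adj u v) - deg G u * deg G v / (2 * numEdges G)) *
            ∑ p ∈ univ.image π, (ind (π u = p) * ind (π v = p)) := by
        rw [Finset.sum_comm]
        refine Finset.sum_congr rfl fun u _ => ?_
        rw [Finset.sum_comm]
        refine Finset.sum_congr rfl fun v _ => ?_
        rw [Finset.mul_sum]
    _ = _ := by
        refine Finset.sum_congr rfl fun u _ => Finset.sum_congr rfl fun v _ => ?_
        rw [indicator_sum]

lemma count_eq {α : Type*} [Fintype α] [DecidableEq α] (k : ℕ) (hk : 0 < k)
    {a b : α} (hab : a ≠ b) :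
    ∑ g : α → Fin k, ind (g a = g b)
      = (Fintype.card (α → Fin k) : ℝ) / k := by
  haveI : Nonempty (Fin k) := ⟨⟨0, hk⟩⟩
  have hsum : ∑ g : α → Fin k, ind (g a = g b)
      = (Fintype.card {g : α → Fin k // g a = g b} : ℝ) := by
    simp only [ind_eq]
    rw [Finset.sum_boole, Fintype.card_subtype]
  rw [hsum]
  have hequiv : {g : α → Fin k // g a = g b} × Fin k ≃ (α → Fin k) :=
    { toFun := fun gc => Function.update gc.1.1 b gc.2
      invFun := fun g => (⟨Function.update g b (g a), by
        simp [Function.update_of_ne hab]⟩, g b)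
      left_inv := by
        rintro ⟨⟨g, hg⟩, c⟩
        simp only [Prod.mk.injEq, Subtype.mk.injEq]
        constructor
        · rw [Function.update_idem, Function.update_of_ne hab, hg, Function.update_eq_self]
        · exact Function.update_self b c g
      right_inv := by
        intro g
        show Function.update (Function.update g b (g a)) b (g b) = g
        rw [Function.update_idem, Function.update_eq_self] }
  have hcard : Fintype.card {g : α → Fin k // g a = g b} * k = Fintype.card (α → Fin k) := by
    rw [← Fintype.card_congr hequiv, Fintype.card_prod, Fintype.card_fin]
  rw [eq_div_iff (by positivity : (k:ℝ) ≠ 0)]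
  exact_mod_cast hcard

lemma avg_ind {S : Finset ℕ} (k : ℕ) (hk : 0 < k) (d : Fin k) {a b : ℕ}
    (ha : a ∈ S) (hb : b ∈ S) :
    ∑ c : (↥S → Fin k), ind ((if h : a ∈ S then c ⟨a, h⟩ else d)
        = (if h : b ∈ S then c ⟨b, h⟩ else d))
      = (Fintype.card (↥S → Fin k) : ℝ) * ((1 - 1/(k:ℝ)) * ind (a = b) + 1/(k:ℝ)) := by
  simp only [dif_pos ha, dif_pos hb]
  by_cases hab : a = b
  · subst hab
    rw [ind_pos rfl]
    have : ∀ c : (↥S → Fin k), ind (c ⟨a, ha⟩ = c ⟨a, hb⟩) = 1 := fun c => ind_pos rfl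
    rw [Finset.sum_congr rfl fun c _ => this c, Finset.sum_const, card_univ,
      nsmul_eq_mul, mul_one]
    ring
  · rw [ind_neg hab]
    have hab' : (⟨a, ha⟩ : ↥S) ≠ ⟨b, hb⟩ := by
      intro h
      exact hab (congrArg Subtype.val h)
    rw [count_eq k hk hab']
    ring

lemma sum_w_zero (G : SimpleGraph V) (hG : 0 < numEdges G) :
    ∑ u : V, ∑ v : V,
      (ind (G.Adj u v) - deg G u * deg G v / (2 * numEdges G)) = 0 := by
  have h2m : (2 * numEdges G : ℝ) ≠ 0 := by positivity
  have h1 : ∑ u : V, ∑ v : V, ind (G.Adj u v) = 2 * numEdges G := by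
    rw [← sum_deg]
    refine Finset.sum_congr rfl fun u _ => ?_
    unfold deg
    exact Finset.sum_congr rfl fun v _ => ind_eq _
  have h2 : ∑ u : V, ∑ v : V, deg G u * deg G v / (2 * numEdges G) = 2 * numEdges G := by
    have hin : ∀ u : V, ∑ v : V, deg G u * deg G v / (2 * numEdges G) = deg G u := by
      intro u
      rw [← Finset.sum_div, ← Finset.mul_sum, sum_deg, mul_div_assoc,
        div_self h2m, mul_one]
    rw [Finset.sum_congr rfl fun u _ => hin u, sum_deg]
  have hsplit : ∑ u : V, ∑ v : V,
      (ind (G.Adj u v) - deg G u * deg G v / (2 * numEdges G))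
      = (∑ u : V, ∑ v : V, ind (G.Adj u v))
        - ∑ u : V, ∑ v : V, deg G u * deg G v / (2 * numEdges G) := by
    rw [← Finset.sum_sub_distrib]
    exact Finset.sum_congr rfl fun u _ => Finset.sum_sub_distrib _ _
  rw [hsplit, h1, h2, sub_self]

lemma avg_snap {S : Finset ℕ} (G : SimpleGraph V) (hG : 0 < numEdges G)
    (k : ℕ) (hk : 0 < k) (d : Fin k) (σ : V → ℕ) (hσ : ∀ v, σ v ∈ S) :
    ∑ c : (↥S → Fin k), snapTerm G (fun v => if h : σ v ∈ S then c ⟨σ v, h⟩ else d)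
      = (Fintype.card (↥S → Fin k) : ℝ) * (1 - 1/(k:ℝ)) * snapTerm G σ := by
  set K := (Fintype.card (↥S → Fin k) : ℝ) with hK
  calc ∑ c : (↥S → Fin k), snapTerm G (fun v => if h : σ v ∈ S then c ⟨σ v, h⟩ else d)
      = ∑ c : (↥S → Fin k), ∑ u : V, ∑ v : V,
          (ind (G.Adj u v) - deg G u * deg G v / (2 * numEdges G)) *
            ind ((if h : σ u ∈ S then c ⟨σ u, h⟩ else d)
                = (if h : σ v ∈ S then c ⟨σ v, h⟩ else d)) := by
        exact Finset.sum_congr rfl fun c _ => snapTerm_eq G _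
    _ = ∑ u : V, ∑ v : V,
          (ind (G.Adj u v) - deg G u * deg G v / (2 * numEdges G)) *
            ∑ c : (↥S → Fin k), ind ((if h : σ u ∈ S then c ⟨σ u, h⟩ else d)
                = (if h : σ v ∈ S then c ⟨σ v, h⟩ else d)) := by
        rw [Finset.sum_comm]
        refine Finset.sum_congr rfl fun u _ => ?_
        rw [Finset.sum_comm]
        refine Finset.sum_congr rfl fun v _ => ?_
        rw [Finset.mul_sum]
    _ = ∑ u : V, ∑ v : V,
          (ind (G.Adj u v) - deg G u * deg G v / (2 * numEdges G)) *
            (K * ((1 - 1/(k:ℝ)) * ind (σ u = σ v) + 1/(k:ℝ))) := by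
        refine Finset.sum_congr rfl fun u _ => Finset.sum_congr rfl fun v _ => ?_
        rw [avg_ind k hk d (hσ u) (hσ v)]
    _ = K * (1 - 1/(k:ℝ)) * (∑ u : V, ∑ v : V,
          (ind (G.Adj u v) - deg G u * deg G v / (2 * numEdges G)) * ind (σ u = σ v))
        + K * (1/(k:ℝ)) * (∑ u : V, ∑ v : V,
          (ind (G.Adj u v) - deg G u * deg G v / (2 * numEdges G))) := by
        rw [Finset.mul_sum, Finset.mul_sum, ← Finset.sum_add_distrib]
        refine Finset.sum_congr rfl fun u _ => ?_
        rw [Finset.mul_sum, Finset.mul_sum, ← Finset.sum_add_distrib]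
        refine Finset.sum_congr rfl fun v _ => ?_
        ring
    _ = K * (1 - 1/(k:ℝ)) * snapTerm G σ := by
        rw [sum_w_zero G hG, ← snapTerm_eq G σ]
        ring

lemma snapTerm_le (G : SimpleGraph V) (hG : 0 < numEdges G) (π : V → P) :
    snapTerm G π ≤ (Fintype.card V : ℝ) ^ 2 := by
  rw [snapTerm_eq]
  calc ∑ u : V, ∑ v : V,
        (ind (G.Adj u v) - deg G u * deg G v / (2 * numEdges G)) * ind (π u = π v)
      ≤ ∑ u : V, ∑ v : V, (1:ℝ) := by
        refine Finset.sum_le_sum fun u _ => Finset.sum_le_sum fun v _ => ?_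
        have hy : 0 ≤ deg G u * deg G v / (2 * numEdges G) := by
          have := deg_nonneg G u; have := deg_nonneg G v; positivity
        by_cases hp : π u = π v <;> by_cases ha : G.Adj u v <;>
          simp [hp, ha, ind_pos, ind_neg] <;> linarith
    _ = (Fintype.card V : ℝ) ^ 2 := by
        simp [Finset.sum_const, card_univ]; ring

lemma qTildeI_le (G : ℕ → SimpleGraph V) (T : ℕ)
    (hE : ∀ t ∈ Icc 1 T, 0 < numEdges (G t)) (ω : ℝ) (hω : 0 ≤ ω)
    (π : V → ℕ → P) :
    qTildeI G 1 T ω π ≤ (T : ℝ) * (Fintype.card V : ℝ) ^ 2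
      + ω * (Fintype.card V : ℝ) * (T : ℝ) := by
  unfold qTildeI
  have h1 : ∑ t ∈ Icc 1 T, snapTerm (G t) (fun v => π v t)
      ≤ (T : ℝ) * (Fintype.card V : ℝ) ^ 2 := by
    calc ∑ t ∈ Icc 1 T, snapTerm (G t) (fun v => π v t)
        ≤ ∑ t ∈ Icc 1 T, (Fintype.card V : ℝ) ^ 2 :=
          Finset.sum_le_sum fun t ht => snapTerm_le (G t) (hE t ht) _
      _ = (T : ℝ) * (Fintype.card V : ℝ) ^ 2 := by
          rw [Finset.sum_const, Nat.card_Icc]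
          simp [nsmul_eq_mul]
  have h2 : ∑ v : V, ∑ t ∈ Icc 1 (T - 1), (if π v t = π v (t+1) then (1:ℝ) else 0)
      ≤ (Fintype.card V : ℝ) * (T : ℝ) := by
    calc ∑ v : V, ∑ t ∈ Icc 1 (T - 1), (if π v t = π v (t+1) then (1:ℝ) else 0)
        ≤ ∑ v : V, ∑ t ∈ Icc 1 (T - 1), (1:ℝ) := by
          refine Finset.sum_le_sum fun v _ => Finset.sum_le_sum fun t _ => ?_
          by_cases h : π v t = π v (t+1) <;> simp [h]
      _ = (Fintype.card V : ℝ) * ((T - 1 : ℕ) : ℝ) := by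
          simp [Finset.sum_const, card_univ, Nat.card_Icc, mul_comm]
      _ ≤ (Fintype.card V : ℝ) * (T : ℝ) := by
          have hle : ((T - 1 : ℕ) : ℝ) ≤ (T : ℝ) := by
            exact_mod_cast Nat.sub_le T 1
          have hn : (0:ℝ) ≤ (Fintype.card V : ℝ) := by positivity
          nlinarith
  have h3 : ω * (∑ v : V, ∑ t ∈ Icc 1 (T - 1), (if π v t = π v (t+1) then (1:ℝ) else 0))
      ≤ ω * ((Fintype.card V : ℝ) * (T : ℝ)) :=
    mul_le_mul_of_nonneg_left h2 hω
  calc _ ≤ (T : ℝ) * (Fintype.card V : ℝ) ^ 2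
        + ω * ((Fintype.card V : ℝ) * (T : ℝ)) := add_le_add h1 h3
    _ = _ := by ring

end Aux

/-- For any temporal graph `𝒢` with `n` vertices and lifetime `T` in
which each snapshot has at least one edge, any `ω ≥ 0` and any integer `k ≥ 2`, the
non-normalised temporal `k`-modularity satisfies
`q̃*_{k,ω}(𝒢) ≥ (1 − 1/k)·q̃*_ω(𝒢) + n ω (T−1)/k`. -/
theorem nonnormalised_temporal_k_modularity_bound {V : Type*} [Fintype V]
    (T : ℕ) (hT : 1 ≤ T) (G : ℕ → SimpleGraph V)
    (hE : ∀ t ∈ Icc 1 T, (G t).edgeSet.Nonempty)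
    (ω : ℝ) (hω : 0 ≤ ω) (k : ℕ) (hk : 2 ≤ k) :
    (1 - 1 / (k : ℝ)) * qTildeStar G T ω +
        (Fintype.card V : ℝ) * ω * ((T : ℝ) - 1) / (k : ℝ) ≤
      qTildeStarK G T ω k := by
  have hk0 : 0 < k := by omega
  have hkR : (0:ℝ) < (k:ℝ) := by exact_mod_cast hk0
  have hE' : ∀ t ∈ Icc 1 T, 0 < numEdges (G t) := fun t ht => numEdges_pos _ (hE t ht)
  set n : ℝ := (Fintype.card V : ℝ) with hn
  have hB : BddAbove (Set.range fun τ : V → ℕ → Fin k => qTildeI G 1 T ω τ) := by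
    refine ⟨(T : ℝ) * n ^ 2 + ω * n * T, ?_⟩
    rintro x ⟨τ, rfl⟩
    exact qTildeI_le G T hE' ω hω τ
  have key : ∀ π : V → ℕ → ℕ,
      (1 - 1/(k:ℝ)) * qTildeI G 1 T ω π + n * ω * ((T:ℝ)-1) / k
        ≤ qTildeStarK G T ω k := by
    intro π
    set S : Finset ℕ := ((Icc 1 T) ×ˢ (univ : Finset V)).image (fun p => π p.2 p.1) with hS
    have hmem : ∀ (v : V) (t : ℕ), t ∈ Icc 1 T → π v t ∈ S := fun v t ht =>
      Finset.mem_image.2 ⟨(t,v), Finset.mem_product.2 ⟨ht, mem_univ v⟩, rfl⟩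
    let d : Fin k := ⟨0, hk0⟩
    haveI : Nonempty (↥S → Fin k) := ⟨fun _ => d⟩
    set K : ℝ := (Fintype.card (↥S → Fin k) : ℝ) with hK
    have hKpos : (0:ℝ) < K := by
      rw [hK]
      exact_mod_cast (Fintype.card_pos : 0 < Fintype.card (↥S → Fin k))
    have hcardIcc : ((Icc 1 (T-1)).card : ℝ) = (T:ℝ) - 1 := by
      rw [Nat.card_Icc]
      have : T - 1 + 1 - 1 = T - 1 := by omega
      rw [this]
      rw [Nat.cast_sub hT, Nat.cast_one]
    have havg : ∑ c : ↥S → Fin k,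
        qTildeI G 1 T ω (fun v t => if h : π v t ∈ S then c ⟨π v t, h⟩ else d)
        = K * ((1 - 1/(k:ℝ)) * qTildeI G 1 T ω π + n * ω * ((T:ℝ)-1) / k) := by
      unfold qTildeI
      simp only [← ind_eq]
      have hsnap : ∑ c : ↥S → Fin k, ∑ t ∈ Icc 1 T,
          snapTerm (G t) (fun v => if h : π v t ∈ S then c ⟨π v t, h⟩ else d)
          = K * (1 - 1/(k:ℝ)) * ∑ t ∈ Icc 1 T, snapTerm (G t) (fun v => π v t) := by
        rw [Finset.sum_comm, Finset.mul_sum]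
        refine Finset.sum_congr rfl fun t ht => ?_
        exact avg_snap (G t) (hE' t ht) k hk0 d (fun v => π v t) (fun v => hmem v t ht)
      have hloy : ∑ c : ↥S → Fin k, ∑ v : V, ∑ t ∈ Icc 1 (T-1),
          ind ((if h : π v t ∈ S then c ⟨π v t, h⟩ else d)
            = (if h : π v (t+1) ∈ S then c ⟨π v (t+1), h⟩ else d))
          = K * (1 - 1/(k:ℝ)) * (∑ v : V, ∑ t ∈ Icc 1 (T-1), ind (π v t = π v (t+1)))
            + K * (1/(k:ℝ)) * (n * ((T:ℝ)-1)) := by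
        rw [Finset.sum_comm]
        have hper : ∀ v : V, ∑ c : ↥S → Fin k, ∑ t ∈ Icc 1 (T-1),
            ind ((if h : π v t ∈ S then c ⟨π v t, h⟩ else d)
              = (if h : π v (t+1) ∈ S then c ⟨π v (t+1), h⟩ else d))
            = ∑ t ∈ Icc 1 (T-1),
                (K * ((1 - 1/(k:ℝ)) * ind (π v t = π v (t+1)) + 1/(k:ℝ))) := by
          intro v
          rw [Finset.sum_comm]
          refine Finset.sum_congr rfl fun t ht => ?_
          have ht' := Finset.mem_Icc.1 ht
          have h1 : π v t ∈ S := hmem v t (Finset.mem_Icc.2 ⟨ht'.1, by omega⟩)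
          have h2 : π v (t+1) ∈ S := hmem v (t+1) (Finset.mem_Icc.2 ⟨by omega, by omega⟩)
          exact avg_ind k hk0 d h1 h2
        rw [Finset.sum_congr rfl fun v _ => hper v]
        have hexp : ∀ v : V, ∑ t ∈ Icc 1 (T-1),
            (K * ((1 - 1/(k:ℝ)) * ind (π v t = π v (t+1)) + 1/(k:ℝ)))
            = K * (1 - 1/(k:ℝ)) * (∑ t ∈ Icc 1 (T-1), ind (π v t = π v (t+1)))
              + K * (1/(k:ℝ)) * ((T:ℝ)-1) := by
          intro v
          have step : ∀ t : ℕ, K * ((1 - 1/(k:ℝ)) * ind (π v t = π v (t+1)) + 1/(k:ℝ))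
              = K * (1 - 1/(k:ℝ)) * ind (π v t = π v (t+1)) + K * (1/(k:ℝ)) :=
            fun t => by ring
          rw [Finset.sum_congr rfl fun t _ => step t, Finset.sum_add_distrib,
            Finset.sum_const, nsmul_eq_mul, hcardIcc, ← Finset.mul_sum]
          ring
        rw [Finset.sum_congr rfl fun v _ => hexp v, Finset.sum_add_distrib,
          Finset.sum_const, card_univ, nsmul_eq_mul, ← Finset.mul_sum]
        ring
      rw [Finset.sum_add_distrib, hsnap]
      have : ∑ c : ↥S → Fin k, ω * ∑ v : V, ∑ t ∈ Icc 1 (T-1),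
          ind ((if h : π v t ∈ S then c ⟨π v t, h⟩ else d)
            = (if h : π v (t+1) ∈ S then c ⟨π v (t+1), h⟩ else d))
          = ω * (∑ c : ↥S → Fin k, ∑ v : V, ∑ t ∈ Icc 1 (T-1),
            ind ((if h : π v t ∈ S then c ⟨π v t, h⟩ else d)
              = (if h : π v (t+1) ∈ S then c ⟨π v (t+1), h⟩ else d))) := by
        rw [Finset.mul_sum]
      rw [this, hloy]
      ring
    have hex : ∃ c : ↥S → Fin k,
        (1 - 1/(k:ℝ)) * qTildeI G 1 T ω π + n * ω * ((T:ℝ)-1) / k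
          ≤ qTildeI G 1 T ω (fun v t => if h : π v t ∈ S then c ⟨π v t, h⟩ else d) := by
      by_contra hcon
      push_neg at hcon
      have hlt : ∑ c : ↥S → Fin k,
          qTildeI G 1 T ω (fun v t => if h : π v t ∈ S then c ⟨π v t, h⟩ else d)
          < ∑ _c : ↥S → Fin k,
            ((1 - 1/(k:ℝ)) * qTildeI G 1 T ω π + n * ω * ((T:ℝ)-1) / k) :=
        Finset.sum_lt_sum_of_nonempty univ_nonempty (fun c _ => hcon c)
      rw [havg, Finset.sum_const, card_univ, nsmul_eq_mul] at hlt
      exact lt_irrefl _ hlt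
    obtain ⟨c, hc⟩ := hex
    refine le_trans hc ?_
    exact le_ciSup hB (fun v t => if h : π v t ∈ S then c ⟨π v t, h⟩ else d)
  have hr : (0:ℝ) < 1 - 1/(k:ℝ) := by
    have h1 : (1:ℝ) < (k:ℝ) := by exact_mod_cast (by omega : 1 < k)
    have : 1/(k:ℝ) < 1 := by
      rw [div_lt_one hkR]; exact h1
    linarith
  haveI : Nonempty (V → ℕ → ℕ) := ⟨fun _ _ => 0⟩
  have hsup : qTildeStar G T ω
      ≤ (qTildeStarK G T ω k - n * ω * ((T:ℝ)-1)/k) / (1 - 1/(k:ℝ)) := by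
    refine ciSup_le fun π => ?_
    rw [le_div_iff₀ hr]
    have := key π
    linarith
  have hfin := mul_le_mul_of_nonneg_left hsup (le_of_lt hr)
  rw [mul_div_cancel₀ _ (ne_of_gt hr)] at hfin
  linarith

end TemporalModularity
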